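/- Let P and φ be real symmetric n×n matrices with P positive definite (largest eigenvalue λ_max(P)) and φ positive definite (smallest eigenvalue λ_min(φ)). Let ε, γ be positive reals with ε ≤ γ, and let x : ℕ → ℝⁿ be a sequence satisfying x(i+1)ᵀ P x(i+1) − x(i)ᵀ P x(i) ≤ − x(i)ᵀ φ x(i) for all i, with x(0)ᵀ P x(0) ≤ γ². Then for every natural number N with N ≥ λ_max(P)(γ² − ε²)/(λ_min(φ) ε²), one has x(N)ᵀ P x(N) ≤ ε². -/

import Mathlib

open scoped Matrix

private lemma psd_quad_nonneg {n : ℕ} {M : Matrix (Fin n) (Fin n) ℝ}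
    (h : M.PosSemidef) (v : Fin n → ℝ) : 0 ≤ v ⬝ᵥ M *ᵥ v := by
  simpa using h.dotProduct_mulVec_nonneg v

private lemma shift_psd {n : ℕ} {A : Matrix (Fin n) (Fin n) ℝ} (hA : A.IsHermitian)
    {c : ℝ} (h : ∀ t ∈ spectrum ℝ A, t ≤ c) :
    (algebraMap ℝ (Matrix (Fin n) (Fin n) ℝ) c - A).PosSemidef := by
  have hH : (algebraMap ℝ (Matrix (Fin n) (Fin n) ℝ) c - A).IsHermitian := by
    refine IsSelfAdjoint.sub ?_ hA
    exact (IsSelfAdjoint.all c).algebraMap _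
  refine hH.posSemidef_iff_eigenvalues_nonneg.mpr fun i => show (0:ℝ) ≤ hH.eigenvalues i from ?_
  have hmem := hH.eigenvalues_mem_spectrum_real i
  rw [← spectrum.singleton_sub_eq] at hmem
  obtain ⟨r, hr, t, ht, hrt⟩ := hmem
  simp only [Set.mem_singleton_iff] at hr
  subst hr
  have hrt' : r - t = hH.eigenvalues i := hrt
  have := h t ht
  linarith

private lemma quad_le_of_spec_le {n : ℕ} {A : Matrix (Fin n) (Fin n) ℝ}
    (hA : A.IsHermitian) {c : ℝ} (h : ∀ t ∈ spectrum ℝ A, t ≤ c) (v : Fin n → ℝ) :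
    v ⬝ᵥ A *ᵥ v ≤ c * (v ⬝ᵥ v) := by
  have := psd_quad_nonneg (shift_psd hA h) v
  have halg : (algebraMap ℝ (Matrix (Fin n) (Fin n) ℝ) c) *ᵥ v = c • v := by
    rw [Algebra.algebraMap_eq_smul_one, Matrix.smul_mulVec, Matrix.one_mulVec]
  rw [Matrix.sub_mulVec, dotProduct_sub, halg, dotProduct_smul, smul_eq_mul] at this
  linarith [this]

private lemma quad_ge_of_spec_ge {n : ℕ} {A : Matrix (Fin n) (Fin n) ℝ}
    (hA : A.IsHermitian) {c : ℝ} (h : ∀ t ∈ spectrum ℝ A, c ≤ t) (v : Fin n → ℝ) :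
    c * (v ⬝ᵥ v) ≤ v ⬝ᵥ A *ᵥ v := by
  have hA' : (-A).IsHermitian := hA.neg
  have h' : ∀ t ∈ spectrum ℝ (-A), t ≤ -c := by
    intro t ht
    rw [← spectrum.neg_eq, Set.mem_neg] at ht
    linarith [h _ ht]
  have := quad_le_of_spec_le hA' h' v
  rw [Matrix.neg_mulVec, dotProduct_neg] at this
  linarith

/-- Justification of the horizon lower bound in the APHUS rule (15): under the
Lyapunov decrease `‖x(i+1)‖_P² − ‖x(i)‖_P² ≤ −‖x(i)‖_φ²`, any trajectory starting
in `{x : xᵀPx ≤ γ²}` enters `{x : xᵀPx ≤ ε²}` within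
`λ_max(P)(γ² − ε²)/(λ_min(φ)ε²)` steps. -/
theorem stmt_11 {n : ℕ} (P φ : Matrix (Fin n) (Fin n) ℝ)
    (hP : P.PosDef) (hφ : φ.PosDef)
    (lmaxP lminφ : ℝ)
    (hlmax : IsGreatest (spectrum ℝ P) lmaxP)
    (hlmin : IsLeast (spectrum ℝ φ) lminφ)
    (ε γ : ℝ) (hε : 0 < ε) (hγ : 0 < γ) (hεγ : ε ≤ γ)
    (x : ℕ → Fin n → ℝ)
    (hdec : ∀ i : ℕ,
      x (i + 1) ⬝ᵥ P *ᵥ x (i + 1) - x i ⬝ᵥ P *ᵥ x i ≤ -(x i ⬝ᵥ φ *ᵥ x i))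
    (h0 : x 0 ⬝ᵥ P *ᵥ x 0 ≤ γ ^ 2)
    (N : ℕ) (hN : lmaxP * (γ ^ 2 - ε ^ 2) / (lminφ * ε ^ 2) ≤ (N : ℝ)) :
    x N ⬝ᵥ P *ᵥ x N ≤ ε ^ 2 := by
  classical
  set V : ℕ → ℝ := fun i => x i ⬝ᵥ P *ᵥ x i with hV
  -- positivity of eigenvalue bounds
  have hlmaxpos : 0 < lmaxP := by
    have := hlmax.1
    rw [hP.isHermitian.spectrum_real_eq_range_eigenvalues] at this
    obtain ⟨i, hi⟩ := this
    exact hi ▸ hP.eigenvalues_pos i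
  have hlminpos : 0 < lminφ := by
    have := hlmin.1
    rw [hφ.isHermitian.spectrum_real_eq_range_eigenvalues] at this
    obtain ⟨i, hi⟩ := this
    exact hi ▸ hφ.eigenvalues_pos i
  -- quadratic form bounds
  have hPub : ∀ v, v ⬝ᵥ P *ᵥ v ≤ lmaxP * (v ⬝ᵥ v) :=
    quad_le_of_spec_le hP.isHermitian (fun t ht => hlmax.2 ht)
  have hφlb : ∀ v, lminφ * (v ⬝ᵥ v) ≤ v ⬝ᵥ φ *ᵥ v :=
    quad_ge_of_spec_ge hφ.isHermitian (fun t ht => hlmin.2 ht)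
  have hφnn : ∀ v, (0:ℝ) ≤ v ⬝ᵥ φ *ᵥ v := fun v => psd_quad_nonneg hφ.posSemidef v
  -- V is antitone
  have hmono : ∀ i j, i ≤ j → V j ≤ V i := by
    intro i j hij
    induction j with
    | zero => simp_all
    | succ k ih =>
      rcases Nat.lt_or_ge i (k+1) with hlt | hge
      · have h1 : V k ≤ V i := ih (Nat.lt_succ_iff.mp hlt)
        have h2 := hdec k
        have := hφnn (x k)
        simp only [hV] at *
        linarith
      · have : i = k + 1 := le_antisymm hij hge
        simp [this]
  by_contra hcon
  push_neg at hcon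
  -- V i > ε² for all i ≤ N
  have hbig : ∀ i ≤ N, ε ^ 2 < V i := fun i hi => lt_of_lt_of_le hcon (hmono i N hi)
  set d : ℝ := lminφ * ε ^ 2 / lmaxP with hd
  have hdpos : 0 < d := by positivity
  -- per-step decrease
  have hstep : ∀ i < N, V (i + 1) ≤ V i - d := by
    intro i hi
    have hVi : ε ^ 2 < V i := hbig i hi.le
    have hxx : ε ^ 2 / lmaxP < x i ⬝ᵥ x i := by
      have := hPub (x i)
      rw [div_lt_iff₀ hlmaxpos]
      simp only [hV] at hVi
      linarith
    have hφi : lminφ * (x i ⬝ᵥ x i) ≤ x i ⬝ᵥ φ *ᵥ x i := hφlb (x i)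
    have h2 := hdec i
    have : d ≤ x i ⬝ᵥ φ *ᵥ x i := by
      calc d = lminφ * (ε ^ 2 / lmaxP) := by rw [hd]; ring
        _ ≤ lminφ * (x i ⬝ᵥ x i) := by nlinarith
        _ ≤ _ := hφi
    simp only [hV] at *
    linarith
  -- accumulate
  have hacc : ∀ k ≤ N, V k ≤ V 0 - k * d := by
    intro k hk
    induction k with
    | zero => simp
    | succ m ih =>
      have h1 := ih (Nat.le_of_succ_le hk)
      have h2 := hstep m (Nat.lt_of_succ_le hk)
      push_cast
      linarith
  have hfin := hacc N le_rfl
  -- N * d ≥ γ² − ε²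
  have hNd : γ ^ 2 - ε ^ 2 ≤ N * d := by
    have : (γ ^ 2 - ε ^ 2) / d ≤ (N : ℝ) := by
      have : lmaxP * (γ ^ 2 - ε ^ 2) / (lminφ * ε ^ 2) = (γ ^ 2 - ε ^ 2) / d := by
        rw [hd]; field_simp
      linarith [this ▸ hN]
    calc γ ^ 2 - ε ^ 2 = ((γ ^ 2 - ε ^ 2) / d) * d := by field_simp
      _ ≤ N * d := by nlinarith
  have : V N ≤ ε ^ 2 := by
    simp only [hV] at h0 ⊢
    linarith
  exact absurd this (not_le.mpr hcon)
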